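/- For every η, ξ ∈ ℝ^N one has ⟨a(|η|)η − a(|ξ|)ξ, η − ξ⟩ ≥ 0, where ⟨·,·⟩ is the Euclidean inner product on ℝ^N and a(|ζ|)ζ is interpreted as 0 when ζ = 0. -/

import Mathlib

open MeasureTheory

/-- Monotonicity of `η ↦ a(|η|)η`:
`⟨a(|η|)η − a(|ξ|)ξ, η − ξ⟩ ≥ 0` for all `η, ξ ∈ ℝ^N`. -/
theorem stmt_11 (N : ℕ) (hN : 1 ≤ N)
    (a g G : ℝ → ℝ)
    (hg_def : ∀ t : ℝ, g t = a |t| * t)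
    (hg_odd : ∀ t : ℝ, g (-t) = - g t)
    (hg_mono : StrictMono g) (hg_surj : Function.Surjective g) (hg_cont : Continuous g)
    (hG : ∀ t : ℝ, G t = ∫ s in (0:ℝ)..t, g s)
    (A : EuclideanSpace ℝ (Fin N) → EuclideanSpace ℝ (Fin N))
    (hA0 : A 0 = 0)
    (hA : ∀ ζ : EuclideanSpace ℝ (Fin N), ζ ≠ 0 → A ζ = a ‖ζ‖ • ζ) :
    ∀ η ξ : EuclideanSpace ℝ (Fin N),
      (0 : ℝ) ≤ inner ℝ (A η - A ξ) (η - ξ) := by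
  have hg0 : g 0 = 0 := by
    have := hg_odd 0
    simp at this
    linarith
  -- a ‖ζ‖ ≥ 0 for ζ ≠ 0
  have ha_nonneg : ∀ ζ : EuclideanSpace ℝ (Fin N), ζ ≠ 0 → 0 ≤ a ‖ζ‖ := by
    intro ζ hζ
    have hpos : (0:ℝ) < ‖ζ‖ := norm_pos_iff.mpr hζ
    have hg : 0 < g ‖ζ‖ := by
      have := hg_mono hpos
      rwa [hg0] at this
    have : g ‖ζ‖ = a ‖ζ‖ * ‖ζ‖ := by
      rw [hg_def, abs_of_pos hpos]
    nlinarith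
  have key1 : ∀ ζ w : EuclideanSpace ℝ (Fin N),
      (inner ℝ (A ζ) w : ℝ) ≤ g ‖ζ‖ * ‖w‖ := by
    intro ζ w
    by_cases hζ : ζ = 0
    · subst hζ
      simp [hA0, hg0]
    · rw [hA ζ hζ, real_inner_smul_left]
      have hpos : (0:ℝ) < ‖ζ‖ := norm_pos_iff.mpr hζ
      have hcs : (inner ℝ ζ w : ℝ) ≤ ‖ζ‖ * ‖w‖ := real_inner_le_norm ζ w
      have hgz : g ‖ζ‖ = a ‖ζ‖ * ‖ζ‖ := by rw [hg_def, abs_of_pos hpos]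
      have hn := ha_nonneg ζ hζ
      calc a ‖ζ‖ * inner ℝ ζ w ≤ a ‖ζ‖ * (‖ζ‖ * ‖w‖) := mul_le_mul_of_nonneg_left hcs hn
        _ = g ‖ζ‖ * ‖w‖ := by rw [hgz]; ring
  have key2 : ∀ ζ : EuclideanSpace ℝ (Fin N),
      (inner ℝ (A ζ) ζ : ℝ) = g ‖ζ‖ * ‖ζ‖ := by
    intro ζ
    by_cases hζ : ζ = 0
    · subst hζ; simp [hA0, hg0]
    · rw [hA ζ hζ, real_inner_smul_left, real_inner_self_eq_norm_mul_norm,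
        hg_def, abs_of_pos (norm_pos_iff.mpr hζ)]
      ring
  intro η ξ
  have expand : (inner ℝ (A η - A ξ) (η - ξ) : ℝ)
      = inner ℝ (A η) η - inner ℝ (A η) ξ - inner ℝ (A ξ) η + inner ℝ (A ξ) ξ := by
    rw [inner_sub_left, inner_sub_right, inner_sub_right]
    ring
  have h1 := key1 η ξ
  have h2 := key1 ξ η
  have h3 := key2 η
  have h4 := key2 ξ
  have hmono : 0 ≤ (g ‖η‖ - g ‖ξ‖) * (‖η‖ - ‖ξ‖) := by
    rcases le_total ‖ξ‖ ‖η‖ with h | h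
    · have := hg_mono.monotone h
      nlinarith
    · have := hg_mono.monotone h
      nlinarith
  rw [expand]
  nlinarith
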